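/- Horner enclosure theorem: let [A] be an interval matrix and K ∈ ℕ with K+2 > ‖[A]‖. Then for every A ∈ [A], exp(A) belongs to [H]([A],K) := [H̃]([A],K) + ρ(‖[A]‖,K)·[−E,E], where [H̃]([A],K) = I + [A](I + ([A]/2)(I + ([A]/3)(⋯(I + [A]/K)⋯))) is computed with interval matrix arithmetic. -/

import Mathlib

open Pointwise

attribute [local instance] Matrix.linftyOpNormedRing Matrix.linftyOpNormedAlgebra

/-- The matrix exponential, defined by its power series. -/
noncomputable def expM {n : ℕ} (A : Matrix (Fin n) (Fin n) ℝ) : Matrix (Fin n) (Fin n) ℝ :=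
  ∑' k : ℕ, (k.factorial : ℝ)⁻¹ • A ^ k

/-- The truncation error bound `ρ(α,K) = α^(K+1) / ((K+1)!·(1 − α/(K+2)))`. -/
noncomputable def rho (α : ℝ) (K : ℕ) : ℝ :=
  α ^ (K + 1) / ((K + 1).factorial * (1 - α / (K + 2)))

/-- An interval matrix, given entrywise by subsets (intervals) of `ℝ`. -/
abbrev IMat (n : ℕ) := Matrix (Fin n) (Fin n) (Set ℝ)

/-- The interval matrix `[A̲, Ā]` with entries `[a̲_{ij}, ā_{ij}]`. -/
def ofBounds {n : ℕ} (lo hi : Matrix (Fin n) (Fin n) ℝ) : IMat n :=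
  fun i j => Set.Icc (lo i j) (hi i j)

/-- Membership of a real matrix in an interval matrix (entrywise membership). -/
def memI {n : ℕ} (M : Matrix (Fin n) (Fin n) ℝ) (A : IMat n) : Prop :=
  ∀ i j, M i j ∈ A i j

/-- Entrywise interval matrix addition (setwise interval addition). -/
def iadd {n : ℕ} (A B : IMat n) : IMat n := fun i j => A i j + B i j

/-- Scalar multiple of an interval matrix (setwise). -/
def ismul {n : ℕ} (c : ℝ) (A : IMat n) : IMat n := fun i j => c • A i j

/-- Interval matrix product: `([A][B])_{ij} = ∑ₖ [a_{ik}]·[b_{kj}]`, where interval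
products are setwise and sums are Minkowski sums (interval arithmetic). -/
def imul {n : ℕ} (A B : IMat n) : IMat n :=
  fun i j => ∑ k : Fin n, Set.image2 (· * ·) (A i k) (B k j)

/-- The degenerate (point) interval identity matrix. -/
def iId (n : ℕ) : IMat n := fun i j => {(1 : Matrix (Fin n) (Fin n) ℝ) i j}

/-- Interval Horner scheme: `ihornerP [A] K K` is the interval evaluation of
`I + [A](I + ([A]/2)(I + ([A]/3)(⋯(I + [A]/K)⋯))))`, built from the recursion
`H_{K+1} = I`, `H_j = I + ([A]/j)·H_{j+1}` (here `ihornerP [A] K m = H_{K+1-m}`). -/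
def ihornerP {n : ℕ} (A : IMat n) (K : ℕ) : ℕ → IMat n
  | 0 => iId n
  | m + 1 => iadd (iId n) (ismul ((K - m : ℕ) : ℝ)⁻¹ (imul A (ihornerP A K m)))

/-- The norm of an interval matrix: `‖[A]‖ = sup{‖A‖_∞ : A ∈ [A]}`. -/
noncomputable def intervalNorm {n : ℕ} (lo hi : Matrix (Fin n) (Fin n) ℝ) : ℝ :=
  sSup ((fun M => ‖M‖) '' {A : Matrix (Fin n) (Fin n) ℝ | ∀ i j, A i j ∈ Set.Icc (lo i j) (hi i j)})


/-- Real Horner scheme mirroring `ihornerP`. -/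
noncomputable def pH {n : ℕ} (A : Matrix (Fin n) (Fin n) ℝ) (K : ℕ) : ℕ → Matrix (Fin n) (Fin n) ℝ
  | 0 => 1
  | m + 1 => 1 + ((K - m : ℕ) : ℝ)⁻¹ • (A * pH A K m)

lemma memI_pH {n : ℕ} {A : Matrix (Fin n) (Fin n) ℝ} {B : IMat n}
    (hA : memI A B) (K : ℕ) : ∀ m, memI (pH A K m) (ihornerP B K m) := by
  intro m
  induction m with
  | zero => intro i j; simp [pH, ihornerP, iId]
  | succ m ih =>
    intro i j
    have h1 : ((1 : Matrix (Fin n) (Fin n) ℝ)) i j ∈ iId n i j := rfl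
    have hmul : (A * pH A K m) i j ∈ imul B (ihornerP B K m) i j := by
      rw [Matrix.mul_apply]
      exact Set.finset_sum_mem_finset_sum Finset.univ _ _
        (fun k _ => Set.mem_image2_of_mem (hA i k) (ih k j))
    have h2 : (((K - m : ℕ) : ℝ)⁻¹ • (A * pH A K m)) i j
        ∈ ismul ((K - m : ℕ) : ℝ)⁻¹ (imul B (ihornerP B K m)) i j := by
      rw [Matrix.smul_apply]
      exact Set.smul_mem_smul_set hmul
    exact Set.add_mem_add h1 h2

lemma pH_eq {n : ℕ} (A : Matrix (Fin n) (Fin n) ℝ) (K : ℕ) :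
    ∀ m, m ≤ K → pH A K m =
      ∑ k ∈ Finset.range (m + 1),
        (((K - m).factorial : ℝ) / ((K - m + k).factorial : ℝ)) • A ^ k := by
  intro m
  induction m with
  | zero =>
    intro _
    have : ((K.factorial : ℝ) / (K.factorial : ℝ)) = 1 :=
      div_self (by exact_mod_cast K.factorial_ne_zero)
    simp [pH, this]
  | succ m ih =>
    intro hm
    have hmK : m < K := hm
    have hj : 1 ≤ K - m := by omega
    have hcast : ((K - m : ℕ) : ℝ) ≠ 0 := by
      have : 0 < K - m := by omega
      exact_mod_cast this.ne'
    -- rewrite pH step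
    show (1 : Matrix (Fin n) (Fin n) ℝ) + ((K - m : ℕ) : ℝ)⁻¹ • (A * pH A K m) = _
    rw [Finset.sum_range_succ'
      (fun k => (((K - (m + 1)).factorial : ℝ) / (((K - (m + 1) + k).factorial : ℝ))) • A ^ k)
      (m + 1)]
    rw [ih (le_of_lt hmK), Finset.mul_sum, Finset.smul_sum]
    have hKm1 : K - (m + 1) + 1 = K - m := by omega
    have hfac : ((K - m : ℕ) : ℝ) * ((K - (m + 1)).factorial : ℝ) = ((K - m).factorial : ℝ) := by
      rw [← hKm1]
      exact_mod_cast (Nat.factorial_succ (K - (m+1))).symm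
    have hz : (((K - (m + 1)).factorial : ℝ) / ((K - (m + 1) + 0).factorial : ℝ)) • A ^ 0
        = (1 : Matrix (Fin n) (Fin n) ℝ) := by
      have : ((K - (m+1)).factorial : ℝ) / ((K - (m+1) + 0).factorial : ℝ) = 1 := by
        rw [Nat.add_zero]
        exact div_self (by exact_mod_cast (K - (m+1)).factorial_ne_zero)
      rw [this, pow_zero, one_smul]
    rw [hz, add_comm (∑ _ ∈ _, _) (1 : Matrix (Fin n) (Fin n) ℝ)]
    congr 1
    refine Finset.sum_congr rfl fun k _ => ?_
    have harg : K - (m + 1) + (k + 1) = K - m + k := by omega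
    rw [harg, mul_smul_comm, smul_smul, ← pow_succ']
    congr 1
    rw [eq_div_iff (by exact_mod_cast (K - m + k).factorial_ne_zero)]
    field_simp
    rw [← hfac]

noncomputable instance matCompl (n : ℕ) : CompleteSpace (Matrix (Fin n) (Fin n) ℝ) :=
  inferInstance

lemma pH_K {n : ℕ} (A : Matrix (Fin n) (Fin n) ℝ) (K : ℕ) :
    pH A K K = ∑ k ∈ Finset.range (K + 1), (k.factorial : ℝ)⁻¹ • A ^ k := by
  rw [pH_eq A K K le_rfl]
  refine Finset.sum_congr rfl fun k _ => ?_
  simp [Nat.sub_self, one_div]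

lemma remainder_bound {n : ℕ} (A : Matrix (Fin n) (Fin n) ℝ) (K : ℕ) (α : ℝ)
    (hα : ‖A‖ ≤ α) (hlt : α < (K : ℝ) + 2) :
    ‖expM A - ∑ k ∈ Finset.range (K + 1), (k.factorial : ℝ)⁻¹ • A ^ k‖ ≤ rho α K := by
  have h0 : 0 ≤ α := (norm_nonneg A).trans hα
  have hK2 : (0 : ℝ) < (K : ℝ) + 2 := by positivity
  have hq0 : (0 : ℝ) ≤ α / ((K : ℝ) + 2) := by positivity
  have hq1 : α / ((K : ℝ) + 2) < 1 := (div_lt_one hK2).2 hlt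
  have hsum : Summable (fun k : ℕ => (k.factorial : ℝ)⁻¹ • A ^ k) := by
    exact (by simpa using NormedSpace.expSeries_summable' (𝕂 := ℝ) A :)
  have hsplit : expM A - ∑ k ∈ Finset.range (K + 1), (k.factorial : ℝ)⁻¹ • A ^ k
      = ∑' i : ℕ, ((i + (K + 1)).factorial : ℝ)⁻¹ • A ^ (i + (K + 1)) := by
    rw [expM, ← hsum.sum_add_tsum_nat_add (K + 1)]
    exact add_sub_cancel_left _ _
  rw [hsplit]
  set c : ℝ := α ^ (K + 1) / ((K + 1).factorial : ℝ) with hc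
  have hgeo : HasSum (fun i : ℕ => c * (α / ((K : ℝ) + 2)) ^ i)
      (c * (1 - α / ((K : ℝ) + 2))⁻¹) :=
    (hasSum_geometric_of_lt_one hq0 hq1).mul_left c
  have hbound : ∀ i : ℕ, ‖((i + (K + 1)).factorial : ℝ)⁻¹ • A ^ (i + (K + 1))‖
      ≤ c * (α / ((K : ℝ) + 2)) ^ i := by
    intro i
    set m := i + (K + 1) with hm
    have hfpos : (0 : ℝ) < (m.factorial : ℝ) := by exact_mod_cast m.factorial_pos
    have h1 : ‖((m.factorial : ℝ))⁻¹ • A ^ m‖ ≤ (m.factorial : ℝ)⁻¹ * α ^ m := by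
      rw [norm_smul, Real.norm_eq_abs, abs_of_pos (inv_pos.2 hfpos)]
      refine mul_le_mul_of_nonneg_left ?_ (by positivity)
      exact (norm_pow_le' A (by omega)).trans (pow_le_pow_left₀ (norm_nonneg A) hα m)
    have key : ((K + 1).factorial : ℝ) * ((K : ℝ) + 2) ^ i ≤ (m.factorial : ℝ) := by
      have := Nat.factorial_mul_pow_le_factorial (m := K + 1) (n := i)
      have h2 : K + 1 + i = m := by omega
      rw [h2] at this
      exact_mod_cast this
    have hden : (0 : ℝ) < ((K + 1).factorial : ℝ) * ((K : ℝ) + 2) ^ i := by positivity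
    calc ‖((m.factorial : ℝ))⁻¹ • A ^ m‖ ≤ (m.factorial : ℝ)⁻¹ * α ^ m := h1
      _ = α ^ m / (m.factorial : ℝ) := by rw [inv_mul_eq_div]
      _ ≤ α ^ m / (((K + 1).factorial : ℝ) * ((K : ℝ) + 2) ^ i) := by
          gcongr
      _ = c * (α / ((K : ℝ) + 2)) ^ i := by
          rw [hc, div_pow, hm, pow_add]
          field_simp
  have := tsum_of_norm_bounded hgeo hbound
  refine this.trans (le_of_eq ?_)
  have hne : (1 - α / ((K : ℝ) + 2)) ≠ 0 := by
    have : 0 < 1 - α / ((K : ℝ) + 2) := by linarith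
    exact this.ne'
  rw [rho, hc]
  field_simp

lemma entry_le_norm {n : ℕ} (M : Matrix (Fin n) (Fin n) ℝ) (i j : Fin n) : |M i j| ≤ ‖M‖ := by
  rw [← Real.norm_eq_abs, ← coe_nnnorm, ← coe_nnnorm, NNReal.coe_le_coe,
    Matrix.linfty_opNNNorm_def]
  calc ‖M i j‖₊ ≤ ∑ j' : Fin n, ‖M i j'‖₊ :=
        Finset.single_le_sum (f := fun j' => ‖M i j'‖₊) (fun _ _ => zero_le) (Finset.mem_univ j)
    _ ≤ _ := Finset.le_sup (f := fun i => ∑ j' : Fin n, ‖M i j'‖₊) (Finset.mem_univ i)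

lemma norm_le_of_rows {n : ℕ} (M : Matrix (Fin n) (Fin n) ℝ) (b : ℝ) (hb : 0 ≤ b)
    (h : ∀ i, ∑ j, |M i j| ≤ b) : ‖M‖ ≤ b := by
  rw [← coe_nnnorm, Matrix.linfty_opNNNorm_def, ← Real.coe_toNNReal b hb, NNReal.coe_le_coe]
  refine Finset.sup_le fun i _ => ?_
  rw [← NNReal.coe_le_coe, Real.coe_toNNReal b hb, NNReal.coe_sum]
  simpa [Real.norm_eq_abs] using h i

lemma norm_le_intervalNorm {n : ℕ} (Alo Ahi : Matrix (Fin n) (Fin n) ℝ)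
    (A : Matrix (Fin n) (Fin n) ℝ) (hAmem : ∀ i j, A i j ∈ Set.Icc (Alo i j) (Ahi i j)) :
    ‖A‖ ≤ intervalNorm Alo Ahi := by
  refine le_csSup ?_ ⟨A, hAmem, rfl⟩
  refine ⟨∑ i, ∑ j, (|Alo i j| + |Ahi i j|), ?_⟩
  rintro r ⟨M, hM, rfl⟩
  refine norm_le_of_rows M _ (by positivity) fun i => ?_
  calc ∑ j, |M i j| ≤ ∑ j, (|Alo i j| + |Ahi i j|) := by
        refine Finset.sum_le_sum fun j _ => ?_
        obtain ⟨hl, hr⟩ := hM i j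
        rw [abs_le]
        constructor
        · have := neg_abs_le (Alo i j); have := abs_nonneg (Ahi i j); linarith
        · have := le_abs_self (Ahi i j); have := abs_nonneg (Alo i j); linarith
    _ ≤ ∑ i, ∑ j, (|Alo i j| + |Ahi i j|) :=
        Finset.single_le_sum (f := fun i => ∑ j, (|Alo i j| + |Ahi i j|))
          (fun _ _ => by positivity) (Finset.mem_univ i)

/-- Horner enclosure theorem: if `K + 2 > ‖[A]‖` then for every `A ∈ [A]`, `exp A`
belongs to `[H]([A],K) = [H̃]([A],K) + ρ(‖[A]‖,K)·[−E,E]`, where `[H̃]([A],K)` is the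
interval Horner evaluation `I + [A](I + ([A]/2)(I + ([A]/3)(⋯(I + [A]/K)⋯))))`. -/
theorem horner_interval_enclosure (n K : ℕ) (Alo Ahi : Matrix (Fin n) (Fin n) ℝ)
    (hA : ∀ i j, Alo i j ≤ Ahi i j) (hK1 : 1 ≤ K)
    (hK : intervalNorm Alo Ahi < (K : ℝ) + 2) :
    ∀ A : Matrix (Fin n) (Fin n) ℝ, (∀ i j, A i j ∈ Set.Icc (Alo i j) (Ahi i j)) →
      memI (expM A)
        (iadd (ihornerP (ofBounds Alo Ahi) K K)
          (fun _ _ => rho (intervalNorm Alo Ahi) K • Set.Icc (-1 : ℝ) 1)) := by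
  intro A hAmem
  have hnorm : ‖A‖ ≤ intervalNorm Alo Ahi := norm_le_intervalNorm Alo Ahi A hAmem
  have hrem' := remainder_bound A K (intervalNorm Alo Ahi) hnorm hK
  have hrem : ‖expM A - pH A K K‖ ≤ rho (intervalNorm Alo Ahi) K := by
    rw [pH_K]; exact hrem'
  have hH : memI (pH A K K) (ihornerP (ofBounds Alo Ahi) K K) :=
    memI_pH (fun i j => hAmem i j) K K
  intro i j
  show expM A i j ∈ ihornerP (ofBounds Alo Ahi) K K i j
    + rho (intervalNorm Alo Ahi) K • Set.Icc (-1 : ℝ) 1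
  set r := rho (intervalNorm Alo Ahi) K with hr
  set x := expM A i j - pH A K K i j with hxdef
  have hx : |x| ≤ r := by
    have h := entry_le_norm (expM A - pH A K K) i j
    rw [Matrix.sub_apply] at h
    exact h.trans hrem
  have hx2 : x ∈ r • Set.Icc (-1 : ℝ) 1 := by
    have hr0 : 0 ≤ r := (abs_nonneg x).trans hx
    rcases eq_or_lt_of_le hr0 with h | h
    · have hx0 : x = 0 := abs_nonpos_iff.mp (hx.trans h.symm.le)
      exact Set.mem_smul_set.2 ⟨0, ⟨by norm_num, by norm_num⟩, by simp [hx0]⟩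
    · obtain ⟨hl, hu⟩ := abs_le.1 hx
      refine Set.mem_smul_set.2 ⟨x / r, ⟨?_, ?_⟩, ?_⟩
      · rw [le_div_iff₀ h]; linarith
      · exact (div_le_one h).2 hu
      · rw [smul_eq_mul]; field_simp
  have hsplitx : expM A i j = pH A K K i j + x := by rw [hxdef]; ring
  rw [hsplitx]
  exact Set.add_mem_add (hH i j) hx2
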